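/- arXiv:2205.03570 — 2 statements merged into one kernel-verified Lean document; each statement's English description precedes it below -/
import Mathlib

section
/- Suppose (x, s) ∈ int(K) × int(K), let D = ΘG ∈ G, and set x̄ = (ΘG)ᵀx, s̄ = (ΘG)^{−1}s. Let w = w_{xs} = T_x s and w̄ = w_{x̄s̄} = T_{x̄} s̄. Then for each block i: (a) the first component of w̄^{(i)} equals the first component of w^{(i)}, and the Euclidean norms of the tails of w̄^{(i)} and w^{(i)} are equal; (b) λ_min(w̄^{(i)}) = λ_min(w^{(i)}) and λ_max(w̄^{(i)}) = λ_max(w^{(i)}); (c) d_2(x̄, s̄) = d_2(x, s) and d_∞(x̄, s̄) = d_∞(x, s). -/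
open scoped BigOperators
open Matrix

namespace SOCP

/-- Index type for a block vector with `k` blocks, block `i` having dimension `d i + 1`. -/
abbrev Idx {k : ℕ} (d : Fin k → ℕ) : Type := (i : Fin k) × Fin (d i + 1)

/-- The `i`-th block of a block vector. -/
def blk {k : ℕ} {d : Fin k → ℕ} (v : Idx d → ℝ) (i : Fin k) : Fin (d i + 1) → ℝ :=
  fun j => v ⟨i, j⟩

/-- Squared Euclidean norm of the tail `u_{2:m}` of a single block. -/
def tailNormSq {m : ℕ} (u : Fin (m + 1) → ℝ) : ℝ := ∑ j : Fin m, u j.succ ^ 2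

/-- Euclidean norm of the tail `u_{2:m}` of a single block. -/
noncomputable def tailNorm {m : ℕ} (u : Fin (m + 1) → ℝ) : ℝ := Real.sqrt (tailNormSq u)

/-- Membership in the cone `K` (a direct product of second-order cones). -/
def inK {k : ℕ} {d : Fin k → ℕ} (v : Idx d → ℝ) : Prop :=
  ∀ i : Fin k, tailNorm (blk v i) ≤ v ⟨i, 0⟩

/-- Membership in the interior of the cone `K`. -/
def inIntK {k : ℕ} {d : Fin k → ℕ} (v : Idx d → ℝ) : Prop :=
  ∀ i : Fin k, tailNorm (blk v i) < v ⟨i, 0⟩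

/-- Euclidean inner product of vectors. -/
def dotV {ι : Type*} [Fintype ι] (u v : ι → ℝ) : ℝ := ∑ a, u a * v a

/-- Euclidean norm of a vector. -/
noncomputable def vnorm {ι : Type*} [Fintype ι] (v : ι → ℝ) : ℝ :=
  Real.sqrt (∑ a, v a ^ 2)

/-- Blockwise Jordan product. -/
def jmul {k : ℕ} {d : Fin k → ℕ} (u v : Idx d → ℝ) : Idx d → ℝ := fun a =>
  if a.2 = 0 then ∑ j, u ⟨a.1, j⟩ * v ⟨a.1, j⟩
  else u ⟨a.1, 0⟩ * v a + v ⟨a.1, 0⟩ * u a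

/-- The unit element `e` of the Jordan algebra. -/
def unitE {k : ℕ} {d : Fin k → ℕ} : Idx d → ℝ := fun a => if a.2 = 0 then 1 else 0

/-- `λ_min` of the `i`-th block. -/
noncomputable def lamMin {k : ℕ} {d : Fin k → ℕ} (v : Idx d → ℝ) (i : Fin k) : ℝ :=
  v ⟨i, 0⟩ - tailNorm (blk v i)

/-- `λ_max` of the `i`-th block. -/
noncomputable def lamMax {k : ℕ} {d : Fin k → ℕ} (v : Idx d → ℝ) (i : Fin k) : ℝ :=
  v ⟨i, 0⟩ + tailNorm (blk v i)

/-- Arrow-head matrix of a single block. -/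
def arrowBlk {m : ℕ} (u : Fin (m + 1) → ℝ) : Matrix (Fin (m + 1)) (Fin (m + 1)) ℝ :=
  Matrix.of fun j j' =>
    if j = 0 then u j' else if j' = 0 then u j else if j = j' then u 0 else 0

/-- Arrow-head matrix `mat(v)` (block diagonal). -/
def matV {k : ℕ} {d : Fin k → ℕ} (v : Idx d → ℝ) : Matrix (Idx d) (Idx d) ℝ :=
  Matrix.blockDiagonal' fun i => arrowBlk (blk v i)

/-- `β_u = sqrt(u_1^2 - ‖u_{2:m}‖^2)` for a single block. -/
noncomputable def betaOf {m : ℕ} (u : Fin (m + 1) → ℝ) : ℝ :=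
  Real.sqrt (u 0 ^ 2 - tailNormSq u)

/-- The matrix `T_u` for a single block. -/
noncomputable def Tblk {m : ℕ} (u : Fin (m + 1) → ℝ) :
    Matrix (Fin (m + 1)) (Fin (m + 1)) ℝ :=
  Matrix.of fun j j' =>
    if j = 0 then u j'
    else if j' = 0 then u j
    else (if j = j' then betaOf u else 0) + u j * u j' / (betaOf u + u 0)

/-- The matrix `T_x` (block diagonal). -/
noncomputable def TV {k : ℕ} {d : Fin k → ℕ} (x : Idx d → ℝ) :
    Matrix (Idx d) (Idx d) ℝ :=
  Matrix.blockDiagonal' fun i => Tblk (blk x i)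

/-- `w_{xs} = T_x s`. -/
noncomputable def wxs {k : ℕ} {d : Fin k → ℕ} (x s : Idx d → ℝ) : Idx d → ℝ :=
  (TV x).mulVec s

/-- Central-path coefficient `μ(x,s) = xᵀs/k`. -/
noncomputable def muV {k : ℕ} {d : Fin k → ℕ} (x s : Idx d → ℝ) : ℝ :=
  dotV x s / (k : ℝ)

/-- Central-path distance `d_2(x,s) = √2 ‖w_{xs} - μ e‖`. -/
noncomputable def d2 {k : ℕ} {d : Fin k → ℕ} (x s : Idx d → ℝ) : ℝ :=
  Real.sqrt 2 * vnorm (wxs x s - muV x s • unitE)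

/-- Central-path distance `d_∞(x,s)`. -/
noncomputable def dInf {k : ℕ} {d : Fin k → ℕ} (x s : Idx d → ℝ) : ℝ :=
  ⨆ i : Fin k, max |lamMax (wxs x s) i - muV x s| |lamMin (wxs x s) i - muV x s|

/-- The matrix `Q = diag(1, -I)` for a single block. -/
def Qblk {m : ℕ} : Matrix (Fin (m + 1)) (Fin (m + 1)) ℝ :=
  Matrix.of fun j j' => if j = j' then (if j = 0 then (1 : ℝ) else -1) else 0

/-- The scaling group `G` of block matrices `Θ G` with `(Gⁱ)ᵀ Qⁱ Gⁱ = Qⁱ`. -/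
def scalingGroup {k : ℕ} (d : Fin k → ℕ) : Set (Matrix (Idx d) (Idx d) ℝ) :=
  { D | ∃ (θ : Fin k → ℝ) (G : ∀ i, Matrix (Fin (d i + 1)) (Fin (d i + 1)) ℝ),
      (∀ i, 0 < θ i) ∧ (∀ i, (G i)ᵀ * Qblk * G i = Qblk) ∧
      D = Matrix.blockDiagonal' fun i => θ i • G i }

/-- Operator 2-norm of a matrix. -/
noncomputable def op2 {m n : Type*} [Fintype m] [Fintype n] [DecidableEq n]
    (M : Matrix m n ℝ) : ℝ :=
  ‖LinearMap.toContinuousLinearMap (Matrix.toEuclideanLin M)‖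

/-- `R_{xs} = T_x X⁻¹ S T_x`. -/
noncomputable def Rxs {k : ℕ} {d : Fin k → ℕ} (x s : Idx d → ℝ) :
    Matrix (Idx d) (Idx d) ℝ :=
  TV x * (matV x)⁻¹ * matV s * TV x

/-- The scaled Newton system of the infeasible IPM (Monteiro–Zhang family). -/
def NewtonSys {k p : ℕ} {d : Fin k → ℕ} (A : Matrix (Fin p) (Idx d) ℝ)
    (Cm : Matrix (Idx d) (Idx d) ℝ) (x : Idx d → ℝ) (y : Fin p → ℝ) (s : Idx d → ℝ)
    (ν : ℝ) (D : Matrix (Idx d) (Idx d) ℝ)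
    (dx : Idx d → ℝ) (dy : Fin p → ℝ) (ds : Idx d → ℝ) : Prop :=
  A.mulVec dx = -((1 - ν) • A.mulVec x) ∧
  Aᵀ.mulVec dy + Cm.mulVec dx + ds =
    -((1 - ν) • (Aᵀ.mulVec y + Cm.mulVec x + s)) ∧
  (matV ((D⁻¹)ᵀ.mulVec x)).mulVec (D.mulVec ds)
      + (matV (D.mulVec s)).mulVec ((D⁻¹)ᵀ.mulVec dx)
    = (ν * muV x s) • unitE - jmul ((D⁻¹)ᵀ.mulVec x) (D.mulVec s)

/-- Central-path neighborhood `N_2(γ)`. -/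
def N2 {k : ℕ} (d : Fin k → ℕ) (p : ℕ) (γ : ℝ) :
    Set ((Idx d → ℝ) × (Fin p → ℝ) × (Idx d → ℝ)) :=
  { z | inIntK z.1 ∧ inIntK z.2.2 ∧ d2 z.1 z.2.2 ≤ γ * muV z.1 z.2.2 }

/-- Central-path neighborhood `N_∞(γ)`. -/
def NInf {k : ℕ} (d : Fin k → ℕ) (p : ℕ) (γ : ℝ) :
    Set ((Idx d → ℝ) × (Fin p → ℝ) × (Idx d → ℝ)) :=
  { z | inIntK z.1 ∧ inIntK z.2.2 ∧ dInf z.1 z.2.2 ≤ γ * muV z.1 z.2.2 }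

/-- The matrix `U_u` for a single block: zero first row and column and lower-right block
`(u_1 - β_u) P_u`, with `P_u` the projection onto the complement of the tail of `u`
(zero when the tail vanishes). -/
noncomputable def Ublk {m : ℕ} (u : Fin (m + 1) → ℝ) :
    Matrix (Fin (m + 1)) (Fin (m + 1)) ℝ :=
  Matrix.of fun j j' =>
    if j = 0 ∨ j' = 0 then 0
    else if tailNormSq u = 0 then 0
    else (u 0 - betaOf u) * ((if j = j' then (1 : ℝ) else 0) - u j * u j' / tailNormSq u)

/-- The block-diagonal matrix `U_x`. -/
noncomputable def UV {k : ℕ} {d : Fin k → ℕ} (x : Idx d → ℝ) :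
    Matrix (Idx d) (Idx d) ℝ :=
  Matrix.blockDiagonal' fun i => Ublk (blk x i)

/-- `Γ_p = 2 (γ²/2 + (1-ν)² k)^{1/2} / (1 - 3γ)`. -/
noncomputable def GammaP (γ ν : ℝ) (k : ℕ) : ℝ :=
  2 * Real.sqrt (γ ^ 2 / 2 + (1 - ν) ^ 2 * k) / (1 - 3 * γ)

/-- `Γ̃ = (4(γ² + δ²)/(1-3γ)²) (1 - δ/√(2k))⁻¹`. -/
noncomputable def GammaTilde (γ δ : ℝ) (k : ℕ) : ℝ :=
  4 * (γ ^ 2 + δ ^ 2) / (1 - 3 * γ) ^ 2 * (1 - δ / Real.sqrt (2 * k))⁻¹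

/-- Jordan determinant of a single block. -/
def jdet {m : ℕ} (u : Fin (m + 1) → ℝ) : ℝ := u 0 ^ 2 - tailNormSq u

lemma dotV_eq_dot {ι : Type*} [Fintype ι] (u v : ι → ℝ) : dotV u v = u ⬝ᵥ v := rfl

lemma Qblk_mulVec {m : ℕ} (u : Fin (m + 1) → ℝ) :
    (Qblk (m := m)).mulVec u = fun j => if j = 0 then u 0 else -u j := by
  funext j
  simp only [Matrix.mulVec, dotProduct, Qblk, Matrix.of_apply]
  rw [Finset.sum_eq_single j]
  · by_cases h : j = 0 <;> simp [h]
  · intro b _ hb; simp [hb.symm]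
  · simp

lemma jdet_eq_dot {m : ℕ} (u : Fin (m + 1) → ℝ) :
    jdet u = dotV u ((Qblk (m := m)).mulVec u) := by
  simp only [jdet, dotV, Qblk_mulVec, tailNormSq]
  rw [Fin.sum_univ_succ]
  simp [Fin.succ_ne_zero, pow_two]
  ring_nf

lemma Tblk_mulVec_zero {m : ℕ} (u v : Fin (m + 1) → ℝ) :
    ((Tblk u).mulVec v) 0 = dotV u v := by
  simp [Tblk, Matrix.mulVec, dotProduct, dotV]

lemma Tblk_mulVec_succ {m : ℕ} (u v : Fin (m + 1) → ℝ) (q : Fin m) :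
    ((Tblk u).mulVec v) q.succ =
      u q.succ * (v 0 + (∑ b : Fin m, u b.succ * v b.succ) / (betaOf u + u 0))
        + betaOf u * v q.succ := by
  simp only [Matrix.mulVec, dotProduct, Tblk, Matrix.of_apply]
  rw [Fin.sum_univ_succ]
  simp only [Fin.succ_ne_zero, if_false, if_true, eq_self_iff_true]
  have : ∀ b : Fin m, ((if q.succ = b.succ then betaOf u else 0)
      + u q.succ * u b.succ / (betaOf u + u 0)) * v b.succ
      = (if q = b then betaOf u * v b.succ else 0)
        + u q.succ * (u b.succ * v b.succ) / (betaOf u + u 0) := by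
    intro b
    by_cases h : q = b <;> simp [h, Fin.succ_inj] <;> ring
  rw [Finset.sum_congr rfl fun b _ => this b, Finset.sum_add_distrib,
    Finset.sum_ite_eq Finset.univ q (fun b => betaOf u * v b.succ)]
  simp only [Finset.mem_univ, if_true]
  simp_rw [mul_div_assoc]
  rw [← Finset.mul_sum, Finset.sum_div]
  simp_rw [mul_div_assoc]
  ring

lemma tailNormSq_nonneg {m : ℕ} (u : Fin (m + 1) → ℝ) : 0 ≤ tailNormSq u :=
  Finset.sum_nonneg fun j _ => sq_nonneg _

lemma jdet_Tblk_mulVec {m : ℕ} (u v : Fin (m + 1) → ℝ)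
    (h : tailNormSq u ≤ u 0 ^ 2) :
    jdet ((Tblk u).mulVec v) = jdet u * jdet v := by
  set β := betaOf u with hβdef
  set t := tailNormSq u with htdef
  set V := tailNormSq v with hVdef
  set r := ∑ b : Fin m, u b.succ * v b.succ with hrdef
  have hβ2 : β ^ 2 = u 0 ^ 2 - t := Real.sq_sqrt (by linarith)
  have hβ0 : 0 ≤ β := Real.sqrt_nonneg _
  set p := v 0 + r / (β + u 0) with hpdef
  have hw0 : ((Tblk u).mulVec v) 0 = u 0 * v 0 + r := by
    rw [Tblk_mulVec_zero]
    simp only [dotV]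
    rw [Fin.sum_univ_succ]
  have hwt : tailNormSq ((Tblk u).mulVec v) = t * p ^ 2 + 2 * β * p * r + β ^ 2 * V := by
    show (∑ q : Fin m, ((Tblk u).mulVec v) q.succ ^ 2) = _
    have : ∀ q : Fin m, ((Tblk u).mulVec v) q.succ ^ 2 =
        u q.succ ^ 2 * p ^ 2 + 2 * β * p * (u q.succ * v q.succ) + β ^ 2 * v q.succ ^ 2 := by
      intro q
      rw [Tblk_mulVec_succ]
      ring
    rw [Finset.sum_congr rfl fun q _ => this q]
    rw [Finset.sum_add_distrib, Finset.sum_add_distrib, ← Finset.mul_sum, ← Finset.mul_sum,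
      ← Finset.sum_mul]
    rw [htdef, hVdef, hrdef]
    simp only [tailNormSq]
  simp only [jdet, hw0, hwt]
  rw [← htdef, ← hVdef]
  by_cases hc : β + u 0 = 0
  · have ht0 : t = 0 := by nlinarith
    have hr0 : r = 0 := by
      rw [hrdef]
      refine Finset.sum_eq_zero fun b _ => ?_
      have hble : u b.succ ^ 2 ≤ t := by
        rw [htdef]
        exact Finset.single_le_sum (f := fun j : Fin m => u j.succ ^ 2)
          (fun j _ => sq_nonneg _) (Finset.mem_univ b)
      have : u b.succ = 0 := by nlinarith [sq_nonneg (u b.succ)]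
      rw [this]; ring
    rw [hr0, ht0]
    have hb2 : β ^ 2 = u 0 ^ 2 := by nlinarith
    linear_combination (-V) * hb2
  · have ht : t = u 0 ^ 2 - β ^ 2 := by linarith
    rw [hpdef, ht]
    field_simp
    ring

lemma Qblk_mul_Qblk {m : ℕ} : (Qblk (m := m)) * Qblk = 1 := by
  ext j j'
  simp only [Matrix.mul_apply, Qblk, Matrix.of_apply, Matrix.one_apply]
  rw [Finset.sum_eq_single j]
  · by_cases h : j = j'
    · subst h
      by_cases h0 : j = 0 <;> simp [h0]
    · by_cases h0 : j = 0 <;> simp [h, h0]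
  · intro b _ hb; simp [hb.symm]
  · simp

lemma Qblk_transpose {m : ℕ} : (Qblk (m := m))ᵀ = Qblk := by
  ext j j'
  by_cases h : j = j' <;> simp [Qblk, Matrix.transpose_apply, h, eq_comm]

lemma dot_transform {ι : Type*} [Fintype ι] [DecidableEq ι]
    (M N : Matrix ι ι ℝ) (u v : ι → ℝ) :
    dotV (Mᵀ.mulVec u) (N.mulVec v) = dotV u ((M * N).mulVec v) := by
  simp only [dotV_eq_dot, Matrix.mulVec_transpose]
  rw [Matrix.dotProduct_mulVec, Matrix.dotProduct_mulVec, Matrix.vecMul_vecMul]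

lemma dot_transform' {ι : Type*} [Fintype ι] [DecidableEq ι]
    (M N : Matrix ι ι ℝ) (u v : ι → ℝ) :
    dotV (M.mulVec u) (N.mulVec v) = dotV u ((Mᵀ * N).mulVec v) := by
  have := dot_transform Mᵀ N u v
  simpa using this

lemma dotV_smul_smul {ι : Type*} [Fintype ι] (a b : ℝ) (u v : ι → ℝ) :
    dotV (a • u) (b • v) = a * b * dotV u v := by
  simp only [dotV, Pi.smul_apply, smul_eq_mul, Finset.mul_sum]
  exact Finset.sum_congr rfl fun j _ => by ring

section Block
variable {m : ℕ} (u v : Fin (m + 1) → ℝ) (θ : ℝ)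
  (G : Matrix (Fin (m + 1)) (Fin (m + 1)) ℝ)

lemma G_left_inv (hG : Gᵀ * Qblk * G = Qblk) : (Qblk * Gᵀ * Qblk) * G = 1 := by
  calc (Qblk * Gᵀ * Qblk) * G = Qblk * (Gᵀ * Qblk * G) := by
        simp only [Matrix.mul_assoc]
    _ = Qblk * Qblk := by rw [hG]
    _ = 1 := Qblk_mul_Qblk

lemma G_right_inv (hG : Gᵀ * Qblk * G = Qblk) : G * (Qblk * Gᵀ * Qblk) = 1 :=
  mul_eq_one_comm.mpr (G_left_inv G hG)

lemma GQGt (hG : Gᵀ * Qblk * G = Qblk) : G * Qblk * Gᵀ = Qblk := by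
  have h1 := congrArg (· * Qblk) (G_right_inv G hG)
  simp only [Matrix.mul_assoc, Qblk_mul_Qblk, Matrix.mul_one, Matrix.one_mul] at h1
  simpa [Matrix.mul_assoc] using h1

lemma jdet_ub (hG : Gᵀ * Qblk * G = Qblk) :
    jdet ((θ • Gᵀ).mulVec u) = θ ^ 2 * jdet u := by
  rw [jdet_eq_dot, jdet_eq_dot, Matrix.smul_mulVec, Matrix.mulVec_smul,
    dotV_smul_smul, Matrix.mulVec_mulVec, dot_transform]
  rw [← Matrix.mul_assoc, GQGt G hG]
  ring

lemma jdet_vb (hG : Gᵀ * Qblk * G = Qblk) :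
    jdet ((θ⁻¹ • (Qblk * Gᵀ * Qblk)).mulVec v) = θ⁻¹ ^ 2 * jdet v := by
  have hH : (Qblk * Gᵀ * Qblk)ᵀ = Qblk * G * Qblk := by
    simp [Matrix.transpose_mul, Qblk_transpose, Matrix.mul_assoc]
  have hKey : (Qblk * G * Qblk) * (Qblk * (Qblk * Gᵀ * Qblk)) = Qblk := by
    calc (Qblk * G * Qblk) * (Qblk * (Qblk * Gᵀ * Qblk))
        = Qblk * (G * ((Qblk * Qblk) * (Qblk * (Gᵀ * Qblk)))) := by
          simp only [Matrix.mul_assoc]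
      _ = Qblk * ((G * Qblk * Gᵀ) * Qblk) := by
          rw [Qblk_mul_Qblk, Matrix.one_mul]; simp only [Matrix.mul_assoc]
      _ = Qblk * (Qblk * Qblk) := by rw [GQGt G hG]
      _ = Qblk := by rw [Qblk_mul_Qblk, Matrix.mul_one]
  rw [jdet_eq_dot, jdet_eq_dot, Matrix.smul_mulVec, Matrix.mulVec_smul,
    dotV_smul_smul, Matrix.mulVec_mulVec, dot_transform', hH, hKey]
  ring

lemma dot_ub_vb (hG : Gᵀ * Qblk * G = Qblk) (hθ : θ ≠ 0) :
    dotV ((θ • Gᵀ).mulVec u) ((θ⁻¹ • (Qblk * Gᵀ * Qblk)).mulVec v) = dotV u v := by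
  rw [Matrix.smul_mulVec, Matrix.smul_mulVec, dotV_smul_smul,
    dot_transform, G_right_inv G hG, Matrix.one_mulVec, mul_inv_cancel₀ hθ, one_mul]

end Block

lemma wbar_core {m : ℕ} (u v : Fin (m + 1) → ℝ) (θ : ℝ)
    (G : Matrix (Fin (m + 1)) (Fin (m + 1)) ℝ)
    (hG : Gᵀ * Qblk * G = Qblk) (hθ : θ ≠ 0)
    (hu : tailNormSq u ≤ u 0 ^ 2) :
    ((Tblk ((θ • Gᵀ).mulVec u)).mulVec ((θ⁻¹ • (Qblk * Gᵀ * Qblk)).mulVec v)) 0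
      = ((Tblk u).mulVec v) 0 ∧
    tailNormSq ((Tblk ((θ • Gᵀ).mulVec u)).mulVec ((θ⁻¹ • (Qblk * Gᵀ * Qblk)).mulVec v))
      = tailNormSq ((Tblk u).mulVec v) := by
  set ub := (θ • Gᵀ).mulVec u with hubd
  set vb := (θ⁻¹ • (Qblk * Gᵀ * Qblk)).mulVec v with hvbd
  have h1 : ((Tblk ub).mulVec vb) 0 = ((Tblk u).mulVec v) 0 := by
    rw [Tblk_mulVec_zero, Tblk_mulVec_zero, hubd, hvbd, dot_ub_vb u v θ G hG hθ]
  have hju : jdet ub = θ ^ 2 * jdet u := jdet_ub u θ G hG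
  have hub2 : tailNormSq ub ≤ ub 0 ^ 2 := by
    have : 0 ≤ jdet ub := by
      rw [hju]
      have : 0 ≤ jdet u := by simp only [jdet]; linarith
      positivity
    simp only [jdet] at this
    linarith
  have h2 : jdet ((Tblk ub).mulVec vb) = jdet ((Tblk u).mulVec v) := by
    rw [jdet_Tblk_mulVec _ _ hub2, jdet_Tblk_mulVec _ _ hu, hju, hvbd,
      jdet_vb v θ G hG]
    field_simp
  have hj1 := h2
  simp only [jdet] at hj1
  rw [h1] at hj1
  exact ⟨h1, by linarith⟩

lemma blockDiagonal'_mulVec_apply {k : ℕ} {d : Fin k → ℕ}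
    (M : ∀ i, Matrix (Fin (d i + 1)) (Fin (d i + 1)) ℝ) (v : Idx d → ℝ)
    (i : Fin k) (j : Fin (d i + 1)) :
    (Matrix.blockDiagonal' M).mulVec v ⟨i, j⟩ = (M i).mulVec (blk v i) j := by
  simp only [Matrix.mulVec, dotProduct]
  rw [← Finset.univ_sigma_univ, Finset.sum_sigma]
  rw [Finset.sum_eq_single i]
  · apply Finset.sum_congr rfl
    intro j' _
    simp [Matrix.blockDiagonal'_apply, blk]
  · intro b _ hb
    apply Finset.sum_eq_zero
    intro j' _
    simp [Matrix.blockDiagonal'_apply, hb.symm]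
  · simp

lemma dotV_blocks {k : ℕ} {d : Fin k → ℕ} (u v : Idx d → ℝ) :
    dotV u v = ∑ i, dotV (blk u i) (blk v i) := by
  simp only [dotV]
  rw [← Finset.univ_sigma_univ, Finset.sum_sigma]
  rfl

/-- Proposition 3: invariance of `w_{xs}` and of the central-path distances under scaling. -/
theorem scaling_invariance {k : ℕ} {d : Fin k → ℕ} (hk : 0 < k)
    (x s : Idx d → ℝ) (hx : inIntK x) (hs : inIntK s)
    (θ : Fin k → ℝ) (hθ : ∀ i, 0 < θ i)
    (G : ∀ i, Matrix (Fin (d i + 1)) (Fin (d i + 1)) ℝ)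
    (hG : ∀ i, (G i)ᵀ * Qblk * G i = Qblk)
    (D : Matrix (Idx d) (Idx d) ℝ)
    (hD : D = Matrix.blockDiagonal' fun i => θ i • G i)
    (xb sb : Idx d → ℝ) (hxb : xb = Dᵀ.mulVec x) (hsb : sb = D⁻¹.mulVec s) :
    (∀ i : Fin k, wxs xb sb ⟨i, 0⟩ = wxs x s ⟨i, 0⟩) ∧
    (∀ i : Fin k, tailNorm (blk (wxs xb sb) i) = tailNorm (blk (wxs x s) i)) ∧
    (∀ i : Fin k, lamMin (wxs xb sb) i = lamMin (wxs x s) i ∧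
      lamMax (wxs xb sb) i = lamMax (wxs x s) i) ∧
    d2 xb sb = d2 x s ∧ dInf xb sb = dInf x s := by

  have hDt : Dᵀ = Matrix.blockDiagonal' fun i => (θ i) • (G i)ᵀ := by
    rw [hD, Matrix.blockDiagonal'_transpose]
    refine congrArg _ (funext fun i => Matrix.transpose_smul (θ i) (G i))
  have hDinv : D⁻¹ = Matrix.blockDiagonal' fun i => (θ i)⁻¹ • (Qblk * (G i)ᵀ * Qblk) := by
    apply Matrix.inv_eq_left_inv
    rw [hD, ← Matrix.blockDiagonal'_mul]
    have h1 : (fun i => ((θ i)⁻¹ • (Qblk * (G i)ᵀ * Qblk)) * (θ i • G i))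
        = fun i : Fin k => (1 : Matrix (Fin (d i + 1)) (Fin (d i + 1)) ℝ) := by
      funext i
      rw [Matrix.smul_mul, Matrix.mul_smul, smul_smul,
        inv_mul_cancel₀ (hθ i).ne', G_left_inv (G i) (hG i), one_smul]
    rw [h1]
    exact Matrix.blockDiagonal'_one
  have hxbblk : ∀ i, blk xb i = ((θ i) • (G i)ᵀ).mulVec (blk x i) := by
    intro i
    funext j
    show xb ⟨i, j⟩ = _
    rw [hxb, hDt, blockDiagonal'_mulVec_apply]
  have hsbblk : ∀ i, blk sb i = ((θ i)⁻¹ • (Qblk * (G i)ᵀ * Qblk)).mulVec (blk s i) := by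
    intro i
    funext j
    show sb ⟨i, j⟩ = _
    rw [hsb, hDinv, blockDiagonal'_mulVec_apply]
  have hwblk : ∀ (x' s' : Idx d → ℝ) (i : Fin k),
      blk (wxs x' s') i = (Tblk (blk x' i)).mulVec (blk s' i) := by
    intro x' s' i
    funext j
    show wxs x' s' ⟨i, j⟩ = _
    rw [wxs, TV, blockDiagonal'_mulVec_apply]
  have hui : ∀ i, tailNormSq (blk x i) ≤ (blk x i) 0 ^ 2 := by
    intro i
    have h := hx i
    have h0 := Real.sqrt_nonneg (tailNormSq (blk x i))
    have h2 := Real.sq_sqrt (tailNormSq_nonneg (blk x i))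
    simp only [tailNorm] at h
    show tailNormSq (blk x i) ≤ x ⟨i, 0⟩ ^ 2
    nlinarith
  have hcore : ∀ i, ((Tblk (blk xb i)).mulVec (blk sb i)) 0
        = ((Tblk (blk x i)).mulVec (blk s i)) 0 ∧
      tailNormSq ((Tblk (blk xb i)).mulVec (blk sb i))
        = tailNormSq ((Tblk (blk x i)).mulVec (blk s i)) := by
    intro i
    rw [hxbblk i, hsbblk i]
    exact wbar_core (blk x i) (blk s i) (θ i) (G i) (hG i) (hθ i).ne' (hui i)
  have hfirst : ∀ i, wxs xb sb ⟨i, 0⟩ = wxs x s ⟨i, 0⟩ := by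
    intro i
    have e1 : wxs xb sb ⟨i, 0⟩ = blk (wxs xb sb) i 0 := rfl
    have e2 : wxs x s ⟨i, 0⟩ = blk (wxs x s) i 0 := rfl
    rw [e1, e2, hwblk xb sb i, hwblk x s i]
    exact (hcore i).1
  have htailsq : ∀ i, tailNormSq (blk (wxs xb sb) i) = tailNormSq (blk (wxs x s) i) := by
    intro i
    rw [hwblk xb sb i, hwblk x s i]
    exact (hcore i).2
  have htail : ∀ i, tailNorm (blk (wxs xb sb) i) = tailNorm (blk (wxs x s) i) := by
    intro i
    rw [tailNorm, tailNorm, htailsq i]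
  have hlam : ∀ i, lamMin (wxs xb sb) i = lamMin (wxs x s) i ∧
      lamMax (wxs xb sb) i = lamMax (wxs x s) i := by
    intro i
    constructor
    · rw [lamMin, lamMin, htail i, hfirst i]
    · rw [lamMax, lamMax, htail i, hfirst i]
  have hmu : muV xb sb = muV x s := by
    rw [muV, muV, dotV_blocks, dotV_blocks]
    congr 1
    refine Finset.sum_congr rfl fun i _ => ?_
    rw [hxbblk i, hsbblk i]
    exact dot_ub_vb (blk x i) (blk s i) (θ i) (G i) (hG i) (hθ i).ne'
  have key : ∀ (w : Idx d → ℝ) (c : ℝ), (∑ a : Idx d, ((w - c • (unitE : Idx d → ℝ)) a) ^ 2)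
      = ∑ i, ((w ⟨i, 0⟩ - c) ^ 2 + tailNormSq (blk w i)) := by
    intro w c
    rw [← Finset.univ_sigma_univ, Finset.sum_sigma]
    refine Finset.sum_congr rfl fun i _ => ?_
    rw [Fin.sum_univ_succ]
    simp only [Pi.sub_apply, Pi.smul_apply, unitE, smul_eq_mul]
    simp [Fin.succ_ne_zero, tailNormSq, blk]
  have hd2 : d2 xb sb = d2 x s := by
    rw [d2, d2, hmu, vnorm, vnorm, key, key]
    congr 2
    exact Finset.sum_congr rfl fun i _ => by rw [hfirst i, htailsq i]
  have hdinf : dInf xb sb = dInf x s := by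
    rw [dInf, dInf, hmu]
    congr 1
    funext i
    rw [(hlam i).1, (hlam i).2]
  exact ⟨hfirst, htail, hlam, hd2, hdinf⟩

end SOCP
end

section
/- Let (x, s) ∈ int(K) × int(K) satisfy max over all blocks i and j ∈ {1,2} of |λ_i^j(w_{xs}) − ν̇| ≤ γ ν̇ for some scalars γ > 0 and ν̇ > 0. Then, in the operator 2-norm: ‖R_{xs} − W_{xs}‖ ≤ 2γν̇, ‖W_{xs} − ν̇ I‖ ≤ γν̇, and ‖R_{xs} − ν̇ I‖ ≤ 3γν̇. -/
open scoped BigOperators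
open Matrix

namespace SOCP

/-! ### Auxiliary development -/

/-- Tail dot product of two blocks. -/
def tdot {m : ℕ} (u v : Fin (m + 1) → ℝ) : ℝ := ∑ j : Fin m, u j.succ * v j.succ

lemma tailNormSq_eq_tdot {m : ℕ} (u : Fin (m + 1) → ℝ) : tailNormSq u = tdot u u := by
  simp [tailNormSq, tdot, sq]

lemma tdot_comm {m : ℕ} (u v : Fin (m + 1) → ℝ) : tdot u v = tdot v u := by
  simp [tdot, mul_comm]

lemma tdot_self_nonneg {m : ℕ} (u : Fin (m + 1) → ℝ) : 0 ≤ tdot u u :=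
  Finset.sum_nonneg fun j _ => mul_self_nonneg _

lemma tdot_sq_le {m : ℕ} (u v : Fin (m + 1) → ℝ) :
    tdot u v ^ 2 ≤ tdot u u * tdot v v := by
  have h := Finset.sum_mul_sq_le_sq_mul_sq Finset.univ (fun j : Fin m => u j.succ) (fun j => v j.succ)
  simpa [tdot, sq] using h

lemma tailNorm_sq {m : ℕ} (u : Fin (m + 1) → ℝ) : tailNorm u ^ 2 = tdot u u := by
  rw [tailNorm, Real.sq_sqrt]
  · exact (tailNormSq_eq_tdot u)
  · rw [tailNormSq_eq_tdot]; exact tdot_self_nonneg u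

lemma tailNorm_nonneg {m : ℕ} (u : Fin (m + 1) → ℝ) : 0 ≤ tailNorm u := Real.sqrt_nonneg _

/-- Facts from interiority of a single block. -/
lemma interior_facts {m : ℕ} {u : Fin (m + 1) → ℝ} (h : tailNorm u < u 0) :
    0 < u 0 ∧ 0 < betaOf u ∧ betaOf u ^ 2 = u 0 ^ 2 - tdot u u := by
  have h0 : 0 < u 0 := lt_of_le_of_lt (tailNorm_nonneg u) h
  have hn : tdot u u < u 0 ^ 2 := by
    have := tailNorm_sq u
    nlinarith [tailNorm_nonneg u]
  have hpos : 0 < u 0 ^ 2 - tailNormSq u := by rw [tailNormSq_eq_tdot]; linarith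
  refine ⟨h0, ?_, ?_⟩
  · exact Real.sqrt_pos.mpr hpos
  · rw [betaOf, Real.sq_sqrt hpos.le, tailNormSq_eq_tdot]
/-- Explicit inverse of an arrow-head block. -/
noncomputable def XinvBlk {m : ℕ} (u : Fin (m + 1) → ℝ) :
    Matrix (Fin (m + 1)) (Fin (m + 1)) ℝ :=
  Matrix.of fun j j' =>
    if j = 0 then (if j' = 0 then u 0 else -u j') / betaOf u ^ 2
    else if j' = 0 then -u j / betaOf u ^ 2
    else ((if j = j' then betaOf u ^ 2 else 0) + u j * u j') / (u 0 * betaOf u ^ 2)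

lemma arrow_mv_zero {m : ℕ} (u v : Fin (m + 1) → ℝ) :
    (arrowBlk u *ᵥ v) 0 = u 0 * v 0 + tdot u v := by
  simp [Matrix.mulVec, dotProduct, arrowBlk, Fin.sum_univ_succ, tdot]

lemma arrow_mv_succ {m : ℕ} (u v : Fin (m + 1) → ℝ) (j : Fin m) :
    (arrowBlk u *ᵥ v) j.succ = u j.succ * v 0 + u 0 * v j.succ := by
  simp [Matrix.mulVec, dotProduct, arrowBlk, Fin.sum_univ_succ, Fin.succ_ne_zero,
    Fin.succ_inj, ite_mul, Finset.sum_ite_eq, Finset.mem_univ]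

lemma T_mv_zero {m : ℕ} (u v : Fin (m + 1) → ℝ) :
    (Tblk u *ᵥ v) 0 = u 0 * v 0 + tdot u v := by
  simp [Matrix.mulVec, dotProduct, Tblk, Fin.sum_univ_succ, tdot]

lemma T_mv_succ {m : ℕ} (u v : Fin (m + 1) → ℝ) (j : Fin m) :
    (Tblk u *ᵥ v) j.succ = u j.succ * v 0 + betaOf u * v j.succ
      + u j.succ * tdot u v / (betaOf u + u 0) := by
  simp only [Matrix.mulVec, dotProduct, Tblk, Matrix.of_apply, Fin.sum_univ_succ,
    Fin.succ_ne_zero, if_false, Fin.succ_inj, ite_false, ite_true]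
  rw [Finset.sum_congr rfl (fun k _ => show
    ((if j = k then betaOf u else 0) + u j.succ * u k.succ / (betaOf u + u 0)) * v k.succ
    = (if j = k then betaOf u * v k.succ else 0)
      + u j.succ * (u k.succ * v k.succ) / (betaOf u + u 0) by
        split <;> ring)]
  rw [Finset.sum_add_distrib, Finset.sum_ite_eq, ← Finset.sum_div, ← Finset.mul_sum]
  simp [tdot]
  ring

lemma Xinv_mv_zero {m : ℕ} (u v : Fin (m + 1) → ℝ) :
    (XinvBlk u *ᵥ v) 0 = (u 0 * v 0 - tdot u v) / betaOf u ^ 2 := by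
  simp only [Matrix.mulVec, dotProduct, XinvBlk, Matrix.of_apply, Fin.sum_univ_succ,
    Fin.succ_ne_zero, if_false, ite_true, if_true]
  rw [Finset.sum_congr rfl (fun k _ => show
    -u k.succ / betaOf u ^ 2 * v k.succ
    = -(u k.succ * v k.succ) / betaOf u ^ 2 by ring)]
  rw [← Finset.sum_div, Finset.sum_neg_distrib]
  simp [tdot, sub_div]
  ring

lemma Xinv_mv_succ {m : ℕ} (u v : Fin (m + 1) → ℝ) (j : Fin m) :
    (XinvBlk u *ᵥ v) j.succ = -u j.succ * v 0 / betaOf u ^ 2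
      + (betaOf u ^ 2 * v j.succ + u j.succ * tdot u v) / (u 0 * betaOf u ^ 2) := by
  simp only [Matrix.mulVec, dotProduct, XinvBlk, Matrix.of_apply, Fin.sum_univ_succ,
    Fin.succ_ne_zero, if_false, Fin.succ_inj, ite_true, if_true]
  rw [Finset.sum_congr rfl (fun k _ => show
    ((if j = k then betaOf u ^ 2 else 0) + u j.succ * u k.succ) / (u 0 * betaOf u ^ 2) * v k.succ
    = (if j = k then betaOf u ^ 2 * v k.succ / (u 0 * betaOf u ^ 2) else 0)
      + u j.succ * (u k.succ * v k.succ) / (u 0 * betaOf u ^ 2) by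
        split <;> ring)]
  rw [Finset.sum_add_distrib, Finset.sum_ite_eq, ← Finset.sum_div, ← Finset.mul_sum]
  simp [tdot]
  ring
/-- A vector whose tail is an explicit combination of the tails of `u`, `p`, `vv`. -/
def shape {m : ℕ} (u p vv : Fin (m + 1) → ℝ) (r cu cp cv : ℝ) : Fin (m + 1) → ℝ :=
  Fin.cons r fun j => cu * u j.succ + cp * p j.succ + cv * vv j.succ

lemma tdot_shape {m : ℕ} (q u p vv : Fin (m + 1) → ℝ) (r cu cp cv : ℝ) :
    tdot q (shape u p vv r cu cp cv)
      = cu * tdot q u + cp * tdot q p + cv * tdot q vv := by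
  simp only [tdot, shape, Fin.cons_succ, Finset.mul_sum, ← Finset.sum_add_distrib]
  exact Finset.sum_congr rfl fun j _ => by ring

lemma tdot_shape_left {m : ℕ} (q u p vv : Fin (m + 1) → ℝ) (r cu cp cv : ℝ) :
    tdot (shape u p vv r cu cp cv) q
      = cu * tdot q u + cp * tdot q p + cv * tdot q vv := by
  rw [tdot_comm, tdot_shape]

lemma shape_zero {m : ℕ} (u p vv : Fin (m + 1) → ℝ) (r cu cp cv : ℝ) :
    shape u p vv r cu cp cv 0 = r := rfl

lemma shape_succ {m : ℕ} (u p vv : Fin (m + 1) → ℝ) (r cu cp cv : ℝ) (j : Fin m) :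
    shape u p vv r cu cp cv j.succ
      = cu * u j.succ + cp * p j.succ + cv * vv j.succ := by
  simp [shape]

lemma vv_eq_shape {m : ℕ} (u p vv : Fin (m + 1) → ℝ) :
    vv = shape u p vv (vv 0) 0 0 1 := by
  funext j
  induction j using Fin.cases with
  | zero => rfl
  | succ j => simp [shape_succ]

lemma p_eq_shape {m : ℕ} (u p vv : Fin (m + 1) → ℝ) :
    p = shape u p vv (p 0) 0 1 0 := by
  funext j
  induction j using Fin.cases with
  | zero => rfl
  | succ j => simp [shape_succ]

lemma T_shape {m : ℕ} (u p vv : Fin (m + 1) → ℝ) (r cu cp cv : ℝ) :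
    Tblk u *ᵥ shape u p vv r cu cp cv
      = shape u p vv
          (u 0 * r + (cu * tdot u u + cp * tdot u p + cv * tdot u vv))
          (betaOf u * cu + r
            + (cu * tdot u u + cp * tdot u p + cv * tdot u vv) / (betaOf u + u 0))
          (betaOf u * cp) (betaOf u * cv) := by
  funext j
  induction j using Fin.cases with
  | zero => rw [T_mv_zero, tdot_shape, shape_zero, shape_zero]
  | succ j =>
      rw [T_mv_succ, tdot_shape, shape_zero, shape_succ, shape_succ]
      ring

lemma arrow_shape {m : ℕ} (q u p vv : Fin (m + 1) → ℝ) (r cu cp cv : ℝ) :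
    arrowBlk q *ᵥ shape u p vv r cu cp cv
      = Fin.cons (q 0 * r + (cu * tdot q u + cp * tdot q p + cv * tdot q vv))
          (fun j => q j.succ * r
            + q 0 * (cu * u j.succ + cp * p j.succ + cv * vv j.succ)) := by
  funext j
  induction j using Fin.cases with
  | zero => rw [arrow_mv_zero, tdot_shape, shape_zero, Fin.cons_zero]
  | succ j => rw [arrow_mv_succ, shape_zero, shape_succ, Fin.cons_succ]

lemma arrowp_shape {m : ℕ} (u p vv : Fin (m + 1) → ℝ) (r cu cp cv : ℝ) :
    arrowBlk p *ᵥ shape u p vv r cu cp cv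
      = shape u p vv
          (p 0 * r + (cu * tdot p u + cp * tdot p p + cv * tdot p vv))
          (p 0 * cu) (r + p 0 * cp) (p 0 * cv) := by
  rw [arrow_shape]
  funext j
  induction j using Fin.cases with
  | zero => rw [Fin.cons_zero, shape_zero]
  | succ j => rw [Fin.cons_succ, shape_succ]; ring

lemma Xinv_shape {m : ℕ} (u p vv : Fin (m + 1) → ℝ) (r cu cp cv : ℝ)
    (ha : u 0 ≠ 0) (hb : betaOf u ≠ 0) :
    XinvBlk u *ᵥ shape u p vv r cu cp cv
      = shape u p vv
          ((u 0 * r - (cu * tdot u u + cp * tdot u p + cv * tdot u vv)) / betaOf u ^ 2)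
          (cu / u 0
            + ((cu * tdot u u + cp * tdot u p + cv * tdot u vv) / (u 0 * betaOf u ^ 2)
              - r / betaOf u ^ 2))
          (cp / u 0) (cv / u 0) := by
  funext j
  induction j using Fin.cases with
  | zero => rw [Xinv_mv_zero, tdot_shape, shape_zero, shape_zero]
  | succ j =>
      rw [Xinv_mv_succ, tdot_shape, shape_zero, shape_succ, shape_succ]
      field_simp
      ring
/-- The key per-block identity: `T X⁻¹ S T v = mat(w) v + D v` where `D` is supported on the
tail with `D v = (⟨x̄,v̄⟩ w̄ - ⟨w̄,x̄⟩ v̄)/x₁`. -/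
lemma key_identity {m : ℕ} (u p vv : Fin (m + 1) → ℝ) (h : tailNorm u < u 0) :
    Tblk u *ᵥ (XinvBlk u *ᵥ (arrowBlk p *ᵥ (Tblk u *ᵥ vv)))
      = fun j => (arrowBlk (Tblk u *ᵥ p) *ᵥ vv) j
          + Fin.cases 0 (fun j' : Fin m => (tdot u vv * (Tblk u *ᵥ p) j'.succ
              - tdot u (Tblk u *ᵥ p) * vv j'.succ) / u 0) j := by
  obtain ⟨ha, hb, hb2⟩ := interior_facts h
  have hτ : betaOf u + u 0 ≠ 0 := by positivity
  have hw : Tblk u *ᵥ p = shape u p vv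
      (u 0 * p 0 + (0 * tdot u u + 1 * tdot u p + 0 * tdot u vv))
      (betaOf u * 0 + p 0
        + (0 * tdot u u + 1 * tdot u p + 0 * tdot u vv) / (betaOf u + u 0))
      (betaOf u * 1) (betaOf u * 0) := by
    conv_lhs => rw [p_eq_shape u p vv]
    rw [T_shape]
  have hLHS : Tblk u *ᵥ vv = Tblk u *ᵥ shape u p vv (vv 0) 0 0 1 := by
    rw [← vv_eq_shape]
  rw [hLHS, T_shape, arrowp_shape, Xinv_shape _ _ _ _ _ _ _ ha.ne' hb.ne', T_shape, hw]
  have hn : tdot u u = u 0 ^ 2 - betaOf u ^ 2 := by linarith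
  funext j
  induction j using Fin.cases with
  | zero =>
      rw [shape_zero]
      simp only [Fin.cases_zero, arrow_mv_zero, shape_zero, tdot_shape, tdot_shape_left,
        add_zero, tdot_comm vv u, tdot_comm vv p, tdot_comm p u]
      rw [hn]
      field_simp
      ring
  | succ j =>
      rw [shape_succ]
      simp only [Fin.cases_succ, arrow_mv_succ, shape_zero, shape_succ, tdot_shape,
        tdot_shape_left, tdot_comm vv u, tdot_comm vv p, tdot_comm p u]
      rw [hn]
      field_simp
      ring
lemma arrow_mul_Xinv {m : ℕ} {u : Fin (m + 1) → ℝ} (h : tailNorm u < u 0) :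
    arrowBlk u * XinvBlk u = 1 := by
  obtain ⟨ha, hb, hb2⟩ := interior_facts h
  ext j j'
  rw [Matrix.mul_apply]
  have hn : tdot u u = u 0 ^ 2 - betaOf u ^ 2 := by linarith
  induction j using Fin.cases with
  | zero =>
      induction j' using Fin.cases with
      | zero =>
          simp only [arrowBlk, XinvBlk, Matrix.of_apply, Fin.sum_univ_succ, ite_true,
            Fin.succ_ne_zero, if_false, if_true, Matrix.one_apply_eq]
          rw [Finset.sum_congr rfl (fun k _ => show
            u k.succ * (-u k.succ / betaOf u ^ 2)
              = -(u k.succ * u k.succ) / betaOf u ^ 2 by ring)]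
          rw [← Finset.sum_div, Finset.sum_neg_distrib, ← tdot, hn]
          field_simp
          ring
      | succ j' =>
          simp only [arrowBlk, XinvBlk, Matrix.of_apply, Fin.sum_univ_succ, ite_true,
            Fin.succ_ne_zero, if_false, if_true,
            Matrix.one_apply_ne (Ne.symm (Fin.succ_ne_zero j'))]
          rw [Finset.sum_congr rfl (fun k _ => show
            u k.succ * (((if k.succ = j'.succ then betaOf u ^ 2 else 0) + u k.succ * u j'.succ)
                / (u 0 * betaOf u ^ 2))
              = ((if j' = k then u k.succ * betaOf u ^ 2 else 0)
                  + u j'.succ * (u k.succ * u k.succ)) / (u 0 * betaOf u ^ 2) by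
            simp only [Fin.succ_inj, eq_comm (a := k) (b := j')]
            split <;> ring)]
          rw [← Finset.sum_div, Finset.sum_add_distrib, Finset.sum_ite_eq,
            ← Finset.mul_sum, ← tdot, hn]
          simp only [Finset.mem_univ, if_true]
          field_simp
          ring
  | succ j =>
      induction j' using Fin.cases with
      | zero =>
          simp only [arrowBlk, XinvBlk, Matrix.of_apply, Fin.sum_univ_succ, ite_true,
            Fin.succ_ne_zero, if_false, if_true, Matrix.one_apply_ne (Fin.succ_ne_zero j)]
          rw [Finset.sum_congr rfl (fun k _ => show
            (if j.succ = k.succ then u 0 else 0) * (-u k.succ / betaOf u ^ 2)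
              = (if j = k then u 0 * (-u k.succ / betaOf u ^ 2) else 0) by
            simp only [Fin.succ_inj]
            split <;> ring)]
          rw [Finset.sum_ite_eq]
          simp only [Finset.mem_univ, if_true]
          field_simp
          ring
      | succ j' =>
          simp only [arrowBlk, XinvBlk, Matrix.of_apply, Fin.sum_univ_succ,
            Fin.succ_ne_zero, if_false, ite_true, if_true]
          rw [Finset.sum_congr rfl (fun k _ => show
            (if j.succ = k.succ then u 0 else 0) *
                (((if k.succ = j'.succ then betaOf u ^ 2 else 0) + u k.succ * u j'.succ)
                  / (u 0 * betaOf u ^ 2))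
              = (if j = k then u 0 * (((if j' = k then betaOf u ^ 2 else 0)
                  + u k.succ * u j'.succ) / (u 0 * betaOf u ^ 2)) else 0) by
            simp only [Fin.succ_inj, eq_comm (a := k) (b := j')]
            split <;> split <;> ring)]
          rw [Finset.sum_ite_eq]
          simp only [Finset.mem_univ, if_true]
          by_cases hjj : j' = j
          · subst hjj
            simp only [if_pos rfl, Matrix.one_apply_eq, if_true]
            field_simp
            ring
          · rw [Matrix.one_apply_ne (by simpa [Fin.succ_inj, eq_comm] using hjj), if_neg hjj]
            field_simp
            ring
lemma blk_blockDiagonal'_mulVec {k : ℕ} {d : Fin k → ℕ}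
    (M : ∀ i, Matrix (Fin (d i + 1)) (Fin (d i + 1)) ℝ) (v : Idx d → ℝ) (i : Fin k) :
    blk (Matrix.blockDiagonal' M *ᵥ v) i = M i *ᵥ blk v i := by
  funext j
  show ∑ a : Idx d, Matrix.blockDiagonal' M ⟨i, j⟩ a * v a = ∑ j', M i j j' * v ⟨i, j'⟩
  rw [← Finset.univ_sigma_univ, Finset.sum_sigma]
  rw [Finset.sum_eq_single i]
  · exact Finset.sum_congr rfl fun j' _ => by
      rw [Matrix.blockDiagonal'_apply_eq]
  · intro i' _ hne
    apply Finset.sum_eq_zero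
    intro j' _
    rw [Matrix.blockDiagonal'_apply_ne _ _ _ (Ne.symm hne), zero_mul]
  · intro hmem
    exact absurd (Finset.mem_univ i) hmem

lemma sum_idx {k : ℕ} {d : Fin k → ℕ} (f : Idx d → ℝ) :
    ∑ a : Idx d, f a = ∑ i : Fin k, ∑ j, f ⟨i, j⟩ := by
  rw [← Finset.univ_sigma_univ, Finset.sum_sigma]

/-- Criterion for a bound on the operator 2-norm. -/
lemma op2_le_of {N : Type*} [Fintype N] [DecidableEq N] {M : Matrix N N ℝ} {c : ℝ}
    (hc : 0 ≤ c) (h : ∀ v : N → ℝ, ∑ a, (M *ᵥ v) a ^ 2 ≤ c ^ 2 * ∑ a, v a ^ 2) :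
    op2 M ≤ c := by
  refine ContinuousLinearMap.opNorm_le_bound _ hc fun x => ?_
  show ‖Matrix.toEuclideanLin M x‖ ≤ c * ‖x‖
  rw [Matrix.toEuclideanLin_apply, EuclideanSpace.norm_eq, EuclideanSpace.norm_eq]
  have h2 : c * Real.sqrt (∑ a, ‖x a‖ ^ 2)
      = Real.sqrt (c ^ 2 * ∑ a, ‖x a‖ ^ 2) := by
    rw [Real.sqrt_mul (by positivity), Real.sqrt_sq hc]
  rw [h2]
  apply Real.sqrt_le_sqrt
  have := h (fun a => x a)
  simpa [sq_abs] using this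

lemma op2_add_le {N : Type*} [Fintype N] [DecidableEq N] (A B : Matrix N N ℝ) :
    op2 (A + B) ≤ op2 A + op2 B := by
  unfold op2
  rw [map_add, map_add]
  exact norm_add_le _ _
lemma tdot_self_eq_sum_sq {m : ℕ} (v : Fin (m + 1) → ℝ) :
    tdot v v = ∑ j : Fin m, v j.succ ^ 2 := by simp [tdot, sq]

/-- Quadratic bound for an arrow-head block. -/
lemma arrow_sq_bound {m : ℕ} (u v : Fin (m + 1) → ℝ) :
    ∑ j, ((arrowBlk u *ᵥ v) j) ^ 2 ≤ (|u 0| + tailNorm u) ^ 2 * ∑ j, v j ^ 2 := by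
  rw [Fin.sum_univ_succ (f := fun j => ((arrowBlk u *ᵥ v) j) ^ 2),
    Fin.sum_univ_succ (f := fun j => v j ^ 2)]
  simp only [arrow_mv_zero, arrow_mv_succ]
  have hexp : ∑ j : Fin m, (u j.succ * v 0 + u 0 * v j.succ) ^ 2
      = tdot u u * v 0 ^ 2 + 2 * (u 0 * v 0) * tdot u v + u 0 ^ 2 * tdot v v := by
    rw [Finset.sum_congr rfl (fun j _ => show (u j.succ * v 0 + u 0 * v j.succ) ^ 2
      = (u j.succ * u j.succ) * v 0 ^ 2 + 2 * (u 0 * v 0) * (u j.succ * v j.succ)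
        + u 0 ^ 2 * (v j.succ * v j.succ) by ring)]
    rw [Finset.sum_add_distrib, Finset.sum_add_distrib, ← Finset.sum_mul,
      ← Finset.mul_sum, ← Finset.mul_sum]
    rfl
  rw [hexp]
  set A := tdot u v
  set n := tdot u u
  set t := tdot v v with ht
  have ht' : ∑ j : Fin m, v j.succ ^ 2 = t := (tdot_self_eq_sum_sq v).symm
  rw [ht']
  have hq2 : tailNorm u ^ 2 = n := tailNorm_sq u
  have hq0 : 0 ≤ tailNorm u := tailNorm_nonneg u
  have ht0 : 0 ≤ t := tdot_self_nonneg v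
  have hA2 : A ^ 2 ≤ n * t := tdot_sq_le u v
  set st := Real.sqrt t with hstdef
  have hst0 : 0 ≤ st := Real.sqrt_nonneg _
  have hst : st ^ 2 = t := Real.sq_sqrt ht0
  have h2 : |A| ≤ tailNorm u * st := by
    have h' : A ^ 2 ≤ (tailNorm u * st) ^ 2 := by nlinarith
    calc |A| = Real.sqrt (A ^ 2) := (Real.sqrt_sq_eq_abs A).symm
      _ ≤ Real.sqrt ((tailNorm u * st) ^ 2) := Real.sqrt_le_sqrt h'
      _ = tailNorm u * st := Real.sqrt_sq (mul_nonneg hq0 hst0)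
  have h1 : u 0 * v 0 * A ≤ |u 0| * |v 0| * |A| := by
    calc u 0 * v 0 * A ≤ |u 0 * v 0 * A| := le_abs_self _
      _ = |u 0| * |v 0| * |A| := by rw [abs_mul, abs_mul]
  have h3 : 2 * (|v 0| * st) ≤ v 0 ^ 2 + t := by
    nlinarith [sq_nonneg (|v 0| - st), sq_abs (v 0)]
  have habs : |u 0| ^ 2 = u 0 ^ 2 := sq_abs _
  nlinarith [mul_nonneg (mul_nonneg (abs_nonneg (u 0)) (abs_nonneg (v 0)))
      (sub_nonneg.2 h2),
    mul_nonneg (mul_nonneg (abs_nonneg (u 0)) hq0) (sub_nonneg.2 h3),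
    abs_nonneg (u 0), abs_nonneg (v 0), abs_nonneg A, sq_abs (v 0)]

/-- Quadratic bound for the tail-supported correction term. -/
lemma Dterm_sq_bound {m : ℕ} (u w v : Fin (m + 1) → ℝ) (h : tailNorm u < u 0) :
    ∑ j, (Fin.cases (0 : ℝ) (fun j' : Fin m =>
        (tdot u v * w j'.succ - tdot u w * v j'.succ) / u 0) j) ^ 2
      ≤ 4 * tdot w w * ∑ j, v j ^ 2 := by
  obtain ⟨ha, hb, hb2⟩ := interior_facts h
  have hn : tdot u u ≤ u 0 ^ 2 := by nlinarith [sq_nonneg (betaOf u)]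
  rw [Fin.sum_univ_succ]
  simp only [Fin.cases_zero, Fin.cases_succ]
  set A := tdot u v
  set G := tdot u w
  set nw := tdot w w with hnw
  set t := tdot v v with htd
  have hCS1 : A ^ 2 ≤ tdot u u * t := tdot_sq_le u v
  have hCS2 : G ^ 2 ≤ tdot u u * nw := tdot_sq_le u w
  have hnw0 : 0 ≤ nw := tdot_self_nonneg w
  have ht0 : 0 ≤ t := tdot_self_nonneg v
  have hn0 : 0 ≤ tdot u u := tdot_self_nonneg u
  have hsum : ∑ j' : Fin m, ((A * w j'.succ - G * v j'.succ) / u 0) ^ 2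
      = (∑ j' : Fin m, (A * w j'.succ - G * v j'.succ) ^ 2) / u 0 ^ 2 := by
    rw [Finset.sum_div]
    exact Finset.sum_congr rfl fun j' _ => by rw [div_pow]
  have hsum2 : ∑ j' : Fin m, (A * w j'.succ - G * v j'.succ) ^ 2
      ≤ 2 * A ^ 2 * nw + 2 * G ^ 2 * t := by
    calc ∑ j' : Fin m, (A * w j'.succ - G * v j'.succ) ^ 2
        ≤ ∑ j' : Fin m, (2 * A ^ 2 * (w j'.succ * w j'.succ)
            + 2 * G ^ 2 * (v j'.succ * v j'.succ)) :=
          Finset.sum_le_sum fun j' _ => by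
            nlinarith [sq_nonneg (A * w j'.succ + G * v j'.succ)]
      _ = 2 * A ^ 2 * nw + 2 * G ^ 2 * t := by
          rw [Finset.sum_add_distrib, ← Finset.mul_sum, ← Finset.mul_sum, hnw, htd]
          rfl
  have hv : t ≤ ∑ j, v j ^ 2 := by
    rw [htd, tdot_self_eq_sum_sq (m := m) v, Fin.sum_univ_succ]
    nlinarith [sq_nonneg (v 0)]
  have hpos : (0 : ℝ) < u 0 ^ 2 := by positivity
  have hfinal : (∑ j' : Fin m, (A * w j'.succ - G * v j'.succ) ^ 2) / u 0 ^ 2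
      ≤ 4 * nw * t := by
    rw [div_le_iff₀ hpos]
    calc ∑ j' : Fin m, (A * w j'.succ - G * v j'.succ) ^ 2
        ≤ 2 * A ^ 2 * nw + 2 * G ^ 2 * t := hsum2
      _ ≤ 2 * (tdot u u * t) * nw + 2 * (tdot u u * nw) * t := by nlinarith
      _ = 4 * (tdot u u) * nw * t := by ring
      _ ≤ 4 * nw * t * u 0 ^ 2 := by
          nlinarith [mul_nonneg (mul_nonneg hnw0 ht0) (sub_nonneg.2 hn)]
  have : (0:ℝ) ^ 2 = 0 := by norm_num
  rw [this, hsum]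
  nlinarith [mul_nonneg hnw0 (sub_nonneg.2 hv)]
/-- First entry shifted block. -/
def shiftB {m : ℕ} (u : Fin (m + 1) → ℝ) (c : ℝ) : Fin (m + 1) → ℝ :=
  Fin.cons (u 0 - c) fun j => u j.succ

lemma tdot_shiftB {m : ℕ} (u z : Fin (m + 1) → ℝ) (c : ℝ) :
    tdot (shiftB u c) z = tdot u z := by
  simp [tdot, shiftB, Fin.cons_succ]

lemma tailNorm_shiftB {m : ℕ} (u : Fin (m + 1) → ℝ) (c : ℝ) :
    tailNorm (shiftB u c) = tailNorm u := by
  unfold tailNorm tailNormSq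
  simp [shiftB, Fin.cons_succ]

lemma arrow_shiftB_mv {m : ℕ} (u : Fin (m + 1) → ℝ) (c : ℝ) (z : Fin (m + 1) → ℝ)
    (j : Fin (m + 1)) :
    (arrowBlk (shiftB u c) *ᵥ z) j = (arrowBlk u *ᵥ z) j - c * z j := by
  induction j using Fin.cases with
  | zero =>
      rw [arrow_mv_zero, arrow_mv_zero, tdot_shiftB]
      simp only [shiftB, Fin.cons_zero]
      ring
  | succ j =>
      rw [arrow_mv_succ, arrow_mv_succ]
      simp only [shiftB, Fin.cons_zero, Fin.cons_succ]
      ring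
theorem Rxs_Wxs_bounds' {k : ℕ} {d : Fin k → ℕ}
    (x s : Idx d → ℝ) (hx : inIntK x) (hs : inIntK s)
    (γ ν' : ℝ) (hγ : 0 < γ) (hν : 0 < ν')
    (hcond : ∀ i : Fin k, |lamMin (wxs x s) i - ν'| ≤ γ * ν' ∧
      |lamMax (wxs x s) i - ν'| ≤ γ * ν') :
    op2 (Rxs x s - matV (wxs x s)) ≤ 2 * γ * ν' ∧
    op2 (matV (wxs x s) - ν' • (1 : Matrix (Idx d) (Idx d) ℝ)) ≤ γ * ν' ∧
    op2 (Rxs x s - ν' • (1 : Matrix (Idx d) (Idx d) ℝ)) ≤ 3 * γ * ν' := by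
  classical
  set w : Idx d → ℝ := wxs x s with hwdef
  have hxblk : ∀ i, tailNorm (blk x i) < blk x i 0 := fun i => hx i
  have hwblk : ∀ i, blk w i = Tblk (blk x i) *ᵥ blk s i := fun i => by
    rw [hwdef, wxs, TV]
    exact blk_blockDiagonal'_mulVec _ s i
  -- eigenvalue facts per block
  have hq : ∀ i, tailNorm (blk w i) ≤ γ * ν' := fun i => by
    have h1 := abs_le.mp (hcond i).1
    have h2 := abs_le.mp (hcond i).2
    rw [lamMin] at h1
    rw [lamMax] at h2
    have e : w ⟨i, 0⟩ = blk w i 0 := rfl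
    rw [e] at h1 h2
    linarith [h1.1, h2.2]
  have hw0 : ∀ i, |blk w i 0 - ν'| + tailNorm (blk w i) ≤ γ * ν' := fun i => by
    have h1 := abs_le.mp (hcond i).1
    have h2 := abs_le.mp (hcond i).2
    rw [lamMin] at h1
    rw [lamMax] at h2
    have e : w ⟨i, 0⟩ = blk w i 0 := rfl
    rw [e] at h1 h2
    rcases le_or_gt 0 (blk w i 0 - ν') with hc | hc
    · rw [abs_of_nonneg hc]; linarith [h2.2]
    · rw [abs_of_neg hc]; linarith [h1.1]
  -- bound on W - ν' I
  have hW : op2 (matV w - ν' • (1 : Matrix (Idx d) (Idx d) ℝ)) ≤ γ * ν' := by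
    apply op2_le_of (by positivity)
    intro v
    have hmv : ∀ i (j : Fin (d i + 1)),
        ((matV w - ν' • (1 : Matrix (Idx d) (Idx d) ℝ)) *ᵥ v) ⟨i, j⟩
          = (arrowBlk (shiftB (blk w i) ν') *ᵥ blk v i) j := by
      intro i j
      rw [arrow_shiftB_mv, Matrix.sub_mulVec]
      have e1 : (matV w *ᵥ v) ⟨i, j⟩ = (arrowBlk (blk w i) *ᵥ blk v i) j :=
        congrFun (blk_blockDiagonal'_mulVec _ v i) j
      have e2 : ((ν' • (1 : Matrix (Idx d) (Idx d) ℝ)) *ᵥ v) ⟨i, j⟩ = ν' * v ⟨i, j⟩ := by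
        rw [Matrix.smul_mulVec, Matrix.one_mulVec]
        rfl
      show (matV w *ᵥ v) ⟨i, j⟩ - ((ν' • (1 : Matrix (Idx d) (Idx d) ℝ)) *ᵥ v) ⟨i, j⟩ = _
      rw [e1, e2]
      rfl
    rw [sum_idx, sum_idx (fun a => v a ^ 2), Finset.mul_sum]
    apply Finset.sum_le_sum
    intro i _
    have hb := arrow_sq_bound (shiftB (blk w i) ν') (blk v i)
    have hc : |shiftB (blk w i) ν' 0| + tailNorm (shiftB (blk w i) ν') ≤ γ * ν' := by
      rw [tailNorm_shiftB]
      exact hw0 i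
    have hc0 : 0 ≤ |shiftB (blk w i) ν' 0| + tailNorm (shiftB (blk w i) ν') :=
      add_nonneg (abs_nonneg _) (tailNorm_nonneg _)
    calc ∑ j, (((matV w - ν' • (1 : Matrix (Idx d) (Idx d) ℝ)) *ᵥ v) ⟨i, j⟩) ^ 2
        = ∑ j, ((arrowBlk (shiftB (blk w i) ν') *ᵥ blk v i) j) ^ 2 :=
          Finset.sum_congr rfl fun j _ => by rw [hmv i j]
      _ ≤ (|shiftB (blk w i) ν' 0| + tailNorm (shiftB (blk w i) ν')) ^ 2
            * ∑ j, blk v i j ^ 2 := hb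
      _ ≤ (γ * ν') ^ 2 * ∑ j, blk v i j ^ 2 := by
          apply mul_le_mul_of_nonneg_right (pow_le_pow_left₀ hc0 hc 2)
          exact Finset.sum_nonneg fun j _ => sq_nonneg _
      _ = (γ * ν') ^ 2 * ∑ j, v ⟨i, j⟩ ^ 2 := rfl
  -- bound on R - W
  have hXinv : (matV x)⁻¹ = Matrix.blockDiagonal' fun i => XinvBlk (blk x i) := by
    apply Matrix.inv_eq_right_inv
    rw [matV, ← Matrix.blockDiagonal'_mul]
    rw [show (fun i => arrowBlk (blk x i) * XinvBlk (blk x i))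
        = fun i => (1 : Matrix (Fin (d i + 1)) (Fin (d i + 1)) ℝ) from
      funext fun i => arrow_mul_Xinv (hxblk i)]
    exact Matrix.blockDiagonal'_one
  have hRW : op2 (Rxs x s - matV w) ≤ 2 * γ * ν' := by
    apply op2_le_of (by positivity)
    intro v
    have hmv : ∀ i (j : Fin (d i + 1)),
        ((Rxs x s - matV w) *ᵥ v) ⟨i, j⟩
          = Fin.cases (0 : ℝ) (fun j' : Fin (d i) =>
              (tdot (blk x i) (blk v i) * blk w i j'.succ
                - tdot (blk x i) (blk w i) * blk v i j'.succ) / blk x i 0) j := by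
      intro i j
      have hR : Rxs x s *ᵥ v
          = TV x *ᵥ ((matV x)⁻¹ *ᵥ (matV s *ᵥ (TV x *ᵥ v))) := by
        rw [Rxs, Matrix.mulVec_mulVec, Matrix.mulVec_mulVec, Matrix.mulVec_mulVec]
      have hblkR : blk (Rxs x s *ᵥ v) i
          = Tblk (blk x i) *ᵥ (XinvBlk (blk x i) *ᵥ (arrowBlk (blk s i)
              *ᵥ (Tblk (blk x i) *ᵥ blk v i))) := by
        rw [hR, hXinv, TV, matV]
        rw [blk_blockDiagonal'_mulVec, blk_blockDiagonal'_mulVec,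
          blk_blockDiagonal'_mulVec, blk_blockDiagonal'_mulVec]
      have hkey := congrFun (key_identity (blk x i) (blk s i) (blk v i) (hxblk i)) j
      rw [← hblkR] at hkey
      have hWv : (matV w *ᵥ v) ⟨i, j⟩ = (arrowBlk (blk w i) *ᵥ blk v i) j :=
        congrFun (blk_blockDiagonal'_mulVec _ v i) j
      rw [Matrix.sub_mulVec]
      show (Rxs x s *ᵥ v) ⟨i, j⟩ - (matV w *ᵥ v) ⟨i, j⟩ = _
      rw [hWv]
      have : (Rxs x s *ᵥ v) ⟨i, j⟩ = blk (Rxs x s *ᵥ v) i j := rfl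
      rw [this, hkey, hwblk i]
      ring
    rw [sum_idx, sum_idx (fun a => v a ^ 2), Finset.mul_sum]
    apply Finset.sum_le_sum
    intro i _
    have hb := Dterm_sq_bound (blk x i) (blk w i) (blk v i) (hxblk i)
    have hnw : 4 * tdot (blk w i) (blk w i) ≤ (2 * γ * ν') ^ 2 := by
      have h1 := hq i
      have h2 : tailNorm (blk w i) ^ 2 = tdot (blk w i) (blk w i) := tailNorm_sq _
      nlinarith [tailNorm_nonneg (blk w i)]
    calc ∑ j, (((Rxs x s - matV w) *ᵥ v) ⟨i, j⟩) ^ 2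
        = ∑ j, (Fin.cases (0 : ℝ) (fun j' : Fin (d i) =>
              (tdot (blk x i) (blk v i) * blk w i j'.succ
                - tdot (blk x i) (blk w i) * blk v i j'.succ) / blk x i 0) j) ^ 2 :=
          Finset.sum_congr rfl fun j _ => by rw [hmv i j]
      _ ≤ 4 * tdot (blk w i) (blk w i) * ∑ j, blk v i j ^ 2 := hb
      _ ≤ (2 * γ * ν') ^ 2 * ∑ j, blk v i j ^ 2 := by
          apply mul_le_mul_of_nonneg_right hnw
          exact Finset.sum_nonneg fun j _ => sq_nonneg _
      _ = (2 * γ * ν') ^ 2 * ∑ j, v ⟨i, j⟩ ^ 2 := rfl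
  refine ⟨hRW, hW, ?_⟩
  have hsplit : Rxs x s - ν' • (1 : Matrix (Idx d) (Idx d) ℝ)
      = (Rxs x s - matV w) + (matV w - ν' • (1 : Matrix (Idx d) (Idx d) ℝ)) := by
    rw [sub_add_sub_cancel]
  rw [hsplit]
  calc op2 ((Rxs x s - matV w) + (matV w - ν' • (1 : Matrix (Idx d) (Idx d) ℝ)))
      ≤ op2 (Rxs x s - matV w)
        + op2 (matV w - ν' • (1 : Matrix (Idx d) (Idx d) ℝ)) := op2_add_le _ _
    _ ≤ 3 * γ * ν' := by linarith
/-- Lemma 3: bounds on `R_{xs}` and `W_{xs}` in the operator 2-norm. -/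
theorem Rxs_Wxs_bounds {k : ℕ} {d : Fin k → ℕ}
    (x s : Idx d → ℝ) (hx : inIntK x) (hs : inIntK s)
    (γ ν' : ℝ) (hγ : 0 < γ) (hν : 0 < ν')
    (hcond : ∀ i : Fin k, |lamMin (wxs x s) i - ν'| ≤ γ * ν' ∧
      |lamMax (wxs x s) i - ν'| ≤ γ * ν') :
    op2 (Rxs x s - matV (wxs x s)) ≤ 2 * γ * ν' ∧
    op2 (matV (wxs x s) - ν' • (1 : Matrix (Idx d) (Idx d) ℝ)) ≤ γ * ν' ∧
    op2 (Rxs x s - ν' • (1 : Matrix (Idx d) (Idx d) ℝ)) ≤ 3 * γ * ν' := by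
  exact Rxs_Wxs_bounds' x s hx hs γ ν' hγ hν hcond
end SOCP
end
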